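/- Let U be a nonempty finite type and R : U → ℝ, and for α > 0 let π_α(u) = exp(R u/α)/∑_{u'} exp(R u'/α) be the Boltzmann distribution of R. Then ∑_{u : R u = max R} π_α(u) tends to 1 as α → 0 from the right; in particular, for every u with R u < max R, π_α(u) tends to 0, and if R has a unique maximizer u* then π_α(u) tends to the indicator of u = u* for every u. (Concentration of the maximum-entropy optimal policy on reward maximizers under annealing, underlying the paper's Theorem 5.2.) -/

import Mathlib

open Filter Topology Classical

/-- The Boltzmann distribution of `R` at temperature `α`. -/
noncomputable def boltzmann {U : Type*} [Fintype U] (R : U → ℝ) (α : ℝ) (u : U) : ℝ :=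
  Real.exp (R u / α) / ∑ u', Real.exp (R u' / α)

theorem boltzmann_concentrates_on_maximizers
    {U : Type*} [Fintype U] [Nonempty U] (R : U → ℝ) :
    (Tendsto
        (fun α : ℝ => ∑ u ∈ Finset.univ.filter
            (fun u => R u = Finset.univ.sup' Finset.univ_nonempty R), boltzmann R α u)
        (𝓝[>] (0 : ℝ)) (𝓝 1)) ∧
    (∀ u, R u < Finset.univ.sup' Finset.univ_nonempty R →
      Tendsto (fun α : ℝ => boltzmann R α u) (𝓝[>] (0 : ℝ)) (𝓝 0)) ∧
    (∀ ustar : U, (∀ u, u ≠ ustar → R u < R ustar) →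
      ∀ u, Tendsto (fun α : ℝ => boltzmann R α u) (𝓝[>] (0 : ℝ))
        (𝓝 (if u = ustar then 1 else 0))) := by
  classical
  set M := Finset.univ.sup' Finset.univ_nonempty R with hM
  have hle : ∀ u, R u ≤ M := fun u => Finset.le_sup' R (Finset.mem_univ u)
  -- limit of each shifted exponential term
  have hterm : ∀ u : U, Tendsto (fun α : ℝ => Real.exp ((R u - M) / α)) (𝓝[>] (0 : ℝ))
      (𝓝 (if R u = M then 1 else 0)) := by
    intro u
    by_cases h : R u = M
    · simp only [h, sub_self, zero_div, Real.exp_zero, if_pos rfl]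
      exact (tendsto_const_nhds : Tendsto (fun _ : ℝ => (1:ℝ)) (𝓝[>] (0:ℝ)) (𝓝 1))

    · have hc : R u - M < 0 := sub_neg.mpr (lt_of_le_of_ne (hle u) h)
      rw [if_neg h]
      have h1 : Tendsto (fun α : ℝ => (R u - M) / α) (𝓝[>] (0 : ℝ)) atBot := by
        have := tendsto_inv_nhdsGT_zero.const_mul_atTop_of_neg (l := 𝓝[>] (0:ℝ)) hc
        simpa [div_eq_mul_inv] using this
      exact Real.tendsto_exp_atBot.comp h1
  set S := Finset.univ.filter (fun u => R u = M) with hS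
  -- the maximizer set is nonempty
  have hSne : S.Nonempty := by
    obtain ⟨b, _, hb⟩ := Finset.exists_mem_eq_sup' Finset.univ_nonempty R
    exact ⟨b, by simp [hS, hb.symm, hM]⟩
  set K : ℝ := (S.card : ℝ) with hK
  have hKpos : 0 < K := by
    rw [hK]
    exact_mod_cast Finset.card_pos.mpr hSne
  -- limit of the denominator
  have hD : Tendsto (fun α : ℝ => ∑ u', Real.exp ((R u' - M) / α)) (𝓝[>] (0 : ℝ)) (𝓝 K) := by
    have h := tendsto_finset_sum Finset.univ (fun u _ => hterm u)
    have : (∑ u', if R u' = M then (1:ℝ) else 0) = K := by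
      simp [hK, hS, Finset.sum_boole]
    rwa [this] at h
  -- rewrite boltzmann in shifted form
  have hrw : ∀ᶠ α : ℝ in 𝓝[>] (0:ℝ), ∀ u,
      boltzmann R α u = Real.exp ((R u - M) / α) / ∑ u', Real.exp ((R u' - M) / α) := by
    filter_upwards [eventually_mem_nhdsWithin] with α hα u
    have hE : Real.exp (M / α) ≠ 0 := (Real.exp_pos _).ne'
    simp only [boltzmann, sub_div, Real.exp_sub, ← Finset.sum_div]
    rw [div_div_div_cancel_right₀ hE]
  -- pointwise limit of boltzmann
  have hpoint : ∀ u : U, Tendsto (fun α : ℝ => boltzmann R α u) (𝓝[>] (0 : ℝ))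
      (𝓝 ((if R u = M then 1 else 0) / K)) := by
    intro u
    have := (hterm u).div hD hKpos.ne'
    exact this.congr' (by filter_upwards [hrw] with α h using (h u).symm)
  refine ⟨?_, ?_, ?_⟩
  · have h := tendsto_finset_sum S (fun u _ => hpoint u)
    have hval : (∑ u ∈ S, (if R u = M then (1:ℝ) else 0) / K) = 1 := by
      have : ∀ u ∈ S, (if R u = M then (1:ℝ) else 0) / K = 1 / K := by
        intro u hu
        rw [if_pos (by simpa [hS] using hu)]
      rw [Finset.sum_congr rfl this, Finset.sum_const, nsmul_eq_mul]
      field_simp [hK]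
      exact hK.symm
    rwa [hval] at h
  · intro u hu
    have : (if R u = M then (1:ℝ) else 0) / K = 0 := by
      rw [if_neg (by exact ne_of_lt hu), zero_div]
    simpa [this] using hpoint u
  · intro ustar hstar u
    have hMstar : M = R ustar := by
      obtain ⟨b, _, hb⟩ := Finset.exists_mem_eq_sup' Finset.univ_nonempty R
      have hb2 : M = R b := hM.trans hb
      by_cases hb' : b = ustar
      · rw [hb2, hb']
      · exact absurd (hb2 ▸ hle ustar) (not_le.mpr (hb2 ▸ hstar b hb'))
    by_cases h : u = ustar
    · subst h
      have hSsingle : S = {u} := by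
        ext v
        simp only [hS, Finset.mem_filter, Finset.mem_univ, true_and, Finset.mem_singleton]
        constructor
        · intro hv
          by_contra hv'
          exact absurd hv (ne_of_lt (hMstar ▸ hstar v hv'))
        · rintro rfl; exact hMstar.symm
      have hK1 : K = 1 := by simp [hK, hSsingle]
      have : (if R u = M then (1:ℝ) else 0) / K = 1 := by
        rw [if_pos hMstar.symm, hK1, div_one]
      simpa [this] using hpoint u
    · have hu : R u < M := hMstar ▸ hstar u h
      have : (if R u = M then (1:ℝ) else 0) / K = 0 := by
        rw [if_neg (ne_of_lt hu), zero_div]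
      rw [if_neg h]
      simpa [this] using hpoint u
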